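/- Let X have a suitable ordering, X_m an initial segment, and U biclosed in X_m. Then the closure Ū of U in X satisfies Ū ∩ X_m = U (and Ū is biclosed in X). -/

import Mathlib

open Set

variable {V : Type*} [AddCommGroup V] [Module ℝ V]

/-- The set of nonnegative linear combinations of elements of `A`. -/
def posSpan (A : Set V) : Set V :=
  {v | ∃ (s : Finset V) (c : V → ℝ),
    (↑s : Set V) ⊆ A ∧ (∀ x ∈ s, 0 ≤ c x) ∧ v = ∑ x ∈ s, c x • x}

/-- The nonnegative span of the pair `α, β`. -/
def cone2 (α β : V) : Set V := {v | ∃ a b : ℝ, 0 ≤ a ∧ 0 ≤ b ∧ v = a • α + b • β}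

/-- `B` is closed in `X`. -/
def IsClosedIn (X B : Set V) : Prop :=
  B ⊆ X ∧ ∀ α ∈ B, ∀ β ∈ B, ∀ γ ∈ X, γ ∈ cone2 α β → γ ∈ B

/-- `B` is coclosed in `X`. -/
def IsCoclosedIn (X B : Set V) : Prop := B ⊆ X ∧ IsClosedIn X (X \ B)

/-- `B` is biclosed in `X`. -/
def IsBiclosedIn (X B : Set V) : Prop := IsClosedIn X B ∧ IsClosedIn X (X \ B)

/-- `B` is convex in `X`. -/
def IsConvexIn (X B : Set V) : Prop := B ⊆ X ∧ posSpan B ∩ X = B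

/-- `B` is biconvex in `X`. -/
def IsBiconvexIn (X B : Set V) : Prop := IsConvexIn X B ∧ IsConvexIn X (X \ B)

/-- `B` is weakly separable in `X`. -/
def WeaklySeparableIn (X B : Set V) : Prop :=
  B ⊆ X ∧ posSpan B ∩ posSpan (X \ B) = {0}

/-- `B` is separable in `X`. -/
def SeparableIn (X B : Set V) : Prop :=
  B ⊆ X ∧ ∃ θ : Module.Dual ℝ V, (∀ α ∈ B, θ α < 0) ∧ (∀ α ∈ X \ B, 0 < θ α)

/-- `X` is clean: every biclosed subset is weakly separable. -/
def IsCleanIn (X : Set V) : Prop := ∀ B : Set V, IsBiclosedIn X B → WeaklySeparableIn X B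

/-- The closure of `U` in `X`: the smallest closed subset of `X` containing `U`. -/
def closureIn (X U : Set V) : Set V := ⋂₀ {C | U ⊆ C ∧ IsClosedIn X C}

/-- The interior of `K` in `X`. -/
def interiorIn (X K : Set V) : Set V := X \ closureIn X (X \ K)

/-- `F` is a full subset of `X`. -/
def IsFullIn (X F : Set V) : Prop :=
  F ⊆ X ∧ ∀ α ∈ F, ∀ β ∈ F, X ∩ (Submodule.span ℝ {α, β} : Set V) ⊆ F

variable {V : Type*} [AddCommGroup V] [Module ℝ V]

/-- `Y` is a linear subset of `X`: the intersection of `X` with a linear subspace. -/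
def IsLinearSubsetOf (X Y : Set V) : Prop := ∃ L : Submodule ℝ V, Y = X ∩ (L : Set V)

/-- `α` is a fundamental vector of `Y`. -/
def IsFundIn (Y : Set V) (α : V) : Prop := α ∈ Y ∧ α ∉ posSpan (Y \ {α})

/-- The index domain of an enumeration of length `N` (with `N = ⊤` for countably
infinite sets). -/
def domN (N : ℕ∞) : Set ℕ := {j | (j : ℕ∞) < N}

/-- The whole set `X` enumerated by `g`. -/
def wholeSet (N : ℕ∞) (g : ℕ → V) : Set V := g '' domN N

/-- The initial segment `Xᵢ = {γ₁, ..., γᵢ}` of the enumeration. -/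
def seg (N : ℕ∞) (g : ℕ → V) (i : ℕ) : Set V := g '' (domN N ∩ {j | j < i})

/-- The enumeration `g` (of length `N`) is a suitable ordering of
`X = wholeSet N g`: `g` is injective, `X` lies in an open half-space, every
2-dimensional linear subset of `X` has fundamental vectors which are ordered before
all other vectors of that subset, and every triple of vectors of an initial segment
`Xᵢ` lies in a full subset `F` of `X` with `F ∩ Xᵢ` clean. -/
def SuitableEnum (N : ℕ∞) (g : ℕ → V) : Prop :=
  Set.InjOn g (domN N) ∧
  (∃ θ : Module.Dual ℝ V, ∀ x ∈ wholeSet N g, 0 < θ x) ∧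
  (∀ Y : Set V, IsLinearSubsetOf (wholeSet N g) Y →
      Module.finrank ℝ (Submodule.span ℝ Y) = 2 →
      (∃ α β : V, IsFundIn Y α ∧ IsFundIn Y β ∧ Y ⊆ cone2 α β) ∧
      (∀ α β : V, IsFundIn Y α → β ∈ Y → ¬ IsFundIn Y β →
        ∀ a ∈ domN N, ∀ b ∈ domN N, g a = α → g b = β → a < b)) ∧
  (∀ i : ℕ, ∀ α ∈ seg N g i, ∀ β ∈ seg N g i, ∀ γ ∈ seg N g i,
      ∃ F : Set V, IsFullIn (wholeSet N g) F ∧ α ∈ F ∧ β ∈ F ∧ γ ∈ F ∧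
        IsCleanIn (F ∩ seg N g i))

section Helpers

variable {V : Type*} [AddCommGroup V] [Module ℝ V]

lemma posSpan_mem {A : Set V} {x : V} (hx : x ∈ A) : x ∈ posSpan A := by
  refine ⟨{x}, fun _ => 1, by simpa using hx, by simp, by simp⟩

lemma posSpan_smul {A : Set V} {c : ℝ} {x : V} (hc : 0 ≤ c) (hx : x ∈ posSpan A) :
    c • x ∈ posSpan A := by
  obtain ⟨s, d, hsA, hd, rfl⟩ := hx
  refine ⟨s, fun z => c * d z, hsA, fun z hz => mul_nonneg hc (hd z hz), ?_⟩
  rw [Finset.smul_sum]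
  exact Finset.sum_congr rfl fun z hz => (mul_smul c (d z) z).symm

lemma posSpan_add {A : Set V} {x y : V} (hx : x ∈ posSpan A) (hy : y ∈ posSpan A) :
    x + y ∈ posSpan A := by
  classical
  obtain ⟨s, c, hsA, hc, rfl⟩ := hx
  obtain ⟨t, d, htA, hd, rfl⟩ := hy
  refine ⟨s ∪ t, fun z => (if z ∈ s then c z else 0) + (if z ∈ t then d z else 0),
    ?_, ?_, ?_⟩
  · intro z hz
    rcases Finset.mem_union.1 (by exact_mod_cast hz) with h | h
    · exact hsA h
    · exact htA h
  · intro z _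
    have h1 : (0:ℝ) ≤ (if z ∈ s then c z else 0) := by
      split_ifs with h; exacts [hc z h, le_refl 0]
    have h2 : (0:ℝ) ≤ (if z ∈ t then d z else 0) := by
      split_ifs with h; exacts [hd z h, le_refl 0]
    exact add_nonneg h1 h2
  · have e1 : ∑ z ∈ s ∪ t, (if z ∈ s then c z else 0) • z = ∑ z ∈ s, c z • z := by
      rw [← Finset.sum_subset Finset.subset_union_left (fun x _ hx => by simp [hx])]
      exact Finset.sum_congr rfl fun z hz => by simp [hz]
    have e2 : ∑ z ∈ s ∪ t, (if z ∈ t then d z else 0) • z = ∑ z ∈ t, d z • z := by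
      rw [← Finset.sum_subset Finset.subset_union_right (fun x _ hx => by simp [hx])]
      exact Finset.sum_congr rfl fun z hz => by simp [hz]
    rw [← e1, ← e2, ← Finset.sum_add_distrib]
    exact Finset.sum_congr rfl fun z _ => (add_smul _ _ z).symm

lemma posSpan_pair {A : Set V} {x y v : V} {a b : ℝ} (hx : x ∈ A) (hy : y ∈ A)
    (hxy : x ≠ y) (ha : 0 ≤ a) (hb : 0 ≤ b) (hv : v = a • x + b • y) :
    v ∈ posSpan A := by
  rw [hv]
  exact posSpan_add (posSpan_smul ha (posSpan_mem hx)) (posSpan_smul hb (posSpan_mem hy))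

lemma cone2_comm {α β v : V} (h : v ∈ cone2 α β) : v ∈ cone2 β α := by
  obtain ⟨a, b, ha, hb, hv⟩ := h
  exact ⟨b, a, hb, ha, by rw [hv, add_comm]⟩

lemma mem_cone2_self {α v : V} {c : ℝ} (hc : 0 ≤ c) (h : v = c • α) : v ∈ cone2 α α :=
  ⟨c, 0, hc, le_refl 0, by rw [h, zero_smul, add_zero]⟩

lemma subset_closureIn {X U : Set V} : U ⊆ closureIn X U := by
  intro x hx C hC
  exact hC.1 hx

lemma closureIn_min {X U C : Set V} (hUC : U ⊆ C) (hC : IsClosedIn X C) :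
    closureIn X U ⊆ C :=
  Set.sInter_subset_of_mem ⟨hUC, hC⟩

lemma isClosedIn_self {X : Set V} : IsClosedIn X X :=
  ⟨subset_rfl, fun _ _ _ _ γ hγ _ => hγ⟩

lemma closureIn_isClosed {X U : Set V} (hUX : U ⊆ X) : IsClosedIn X (closureIn X U) := by
  constructor
  · exact closureIn_min hUX isClosedIn_self
  · intro a ha b hb γ hγ hcone C hC
    exact hC.2.2 a (ha C hC) b (hb C hC) γ hγ hcone

lemma closedIn_restrict {X B Z : Set V} (hB : IsClosedIn X B) (hZ : Z ⊆ X) :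
    IsClosedIn Z (B ∩ Z) := by
  refine ⟨Set.inter_subset_right, ?_⟩
  intro a ha b hb γ hγ hcone
  exact ⟨hB.2 a ha.1 b hb.1 γ (hZ hγ) hcone, hγ⟩

lemma biclosed_restrict {X B Z : Set V} (hB : IsBiclosedIn X B) (hZ : Z ⊆ X) :
    IsBiclosedIn Z (B ∩ Z) := by
  refine ⟨closedIn_restrict hB.1 hZ, ?_⟩
  have h : Z \ (B ∩ Z) = (X \ B) ∩ Z := by
    ext z
    constructor
    · rintro ⟨hz, hz2⟩
      exact ⟨⟨hZ hz, fun hb => hz2 ⟨hb, hz⟩⟩, hz⟩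
    · rintro ⟨⟨_, hz2⟩, hz⟩
      exact ⟨hz, fun hb => hz2 hb.1⟩
  rw [h]
  exact closedIn_restrict hB.2 hZ

end Helpers
section Helpers2

variable {V : Type*} [AddCommGroup V] [Module ℝ V]

lemma seg_mono {N : ℕ∞} {g : ℕ → V} {i j : ℕ} (h : i ≤ j) : seg N g i ⊆ seg N g j :=
  Set.image_mono fun x hx => ⟨hx.1, lt_of_lt_of_le hx.2 h⟩

lemma seg_subset_whole {N : ℕ∞} {g : ℕ → V} {i : ℕ} : seg N g i ⊆ wholeSet N g :=
  Set.image_mono Set.inter_subset_left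

lemma mem_seg_iff {N : ℕ∞} {g : ℕ → V} {i : ℕ} {x : V} :
    x ∈ seg N g i ↔ ∃ j, j ∈ domN N ∧ j < i ∧ g j = x := by
  constructor
  · rintro ⟨j, ⟨hj1, hj2⟩, rfl⟩
    exact ⟨j, hj1, hj2, rfl⟩
  · rintro ⟨j, hj1, hj2, rfl⟩
    exact ⟨j, ⟨hj1, hj2⟩, rfl⟩

lemma seg_succ_mem {N : ℕ∞} {g : ℕ → V} {n : ℕ} (hn : n ∈ domN N) :
    seg N g (n + 1) = insert (g n) (seg N g n) := by
  ext x
  rw [mem_seg_iff, Set.mem_insert_iff, mem_seg_iff]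
  constructor
  · rintro ⟨j, hj1, hj2, rfl⟩
    rcases Nat.lt_succ_iff_lt_or_eq.1 hj2 with h | rfl
    · exact Or.inr ⟨j, hj1, h, rfl⟩
    · exact Or.inl rfl
  · rintro (rfl | ⟨j, hj1, hj2, rfl⟩)
    · exact ⟨n, hn, Nat.lt_succ_self n, rfl⟩
    · exact ⟨j, hj1, Nat.lt_succ_of_lt hj2, rfl⟩

lemma seg_succ_not_mem {N : ℕ∞} {g : ℕ → V} {n : ℕ} (hn : n ∉ domN N) :
    seg N g (n + 1) = seg N g n := by
  ext x
  rw [mem_seg_iff, mem_seg_iff]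
  constructor
  · rintro ⟨j, hj1, hj2, rfl⟩
    refine ⟨j, hj1, ?_, rfl⟩
    rcases Nat.lt_succ_iff_lt_or_eq.1 hj2 with h | rfl
    · exact h
    · exact absurd hj1 hn
  · rintro ⟨j, hj1, hj2, rfl⟩
    exact ⟨j, hj1, Nat.lt_succ_of_lt hj2, rfl⟩

lemma self_not_mem_seg {N : ℕ∞} {g : ℕ → V} {n : ℕ} (hinj : Set.InjOn g (domN N))
    (hn : n ∈ domN N) : g n ∉ seg N g n := by
  rw [mem_seg_iff]
  rintro ⟨j, hj1, hj2, hj3⟩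
  exact absurd (hinj hj1 hn hj3) (Nat.ne_of_lt hj2)

lemma mem_whole_exists_seg {N : ℕ∞} {g : ℕ → V} {x : V} (hx : x ∈ wholeSet N g) :
    ∃ n, x ∈ seg N g n := by
  obtain ⟨j, hj, rfl⟩ := hx
  exact ⟨j + 1, ⟨j, ⟨hj, Nat.lt_succ_self j⟩, rfl⟩⟩

/-- Cramer-style lemma: betweenness in coordinates implies cone membership. -/
lemma cone2_of_coords {e₁ e₂ u v w : V} {u₁ u₂ v₁ v₂ w₁ w₂ : ℝ}
    (hu : u = u₁ • e₁ + u₂ • e₂) (hv : v = v₁ • e₁ + v₂ • e₂)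
    (hw : w = w₁ • e₁ + w₂ • e₂)
    (hD : 0 < u₁ * v₂ - u₂ * v₁) (h1 : 0 ≤ w₁ * v₂ - w₂ * v₁)
    (h2 : 0 ≤ u₁ * w₂ - u₂ * w₁) : w ∈ cone2 u v := by
  set D : ℝ := u₁ * v₂ - u₂ * v₁ with hDdef
  have hD0 : D ≠ 0 := ne_of_gt hD
  obtain ⟨s, hs⟩ : ∃ s : ℝ, s = (w₁ * v₂ - w₂ * v₁) / D := ⟨_, rfl⟩
  obtain ⟨r, hr⟩ : ∃ r : ℝ, r = (u₁ * w₂ - u₂ * w₁) / D := ⟨_, rfl⟩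
  have k1 : w₁ = s * u₁ + r * v₁ := by
    rw [hs, hr, div_mul_eq_mul_div, div_mul_eq_mul_div, ← add_div, eq_div_iff hD0]
    ring
  have k2 : w₂ = s * u₂ + r * v₂ := by
    rw [hs, hr, div_mul_eq_mul_div, div_mul_eq_mul_div, ← add_div, eq_div_iff hD0]
    ring
  refine ⟨s, r, by rw [hs]; positivity, by rw [hr]; positivity, ?_⟩
  rw [hw, hu, hv]
  match_scalars
  · linear_combination k1
  · linear_combination k2

end Helpers2
section Helpers3

variable {V : Type*} [AddCommGroup V] [Module ℝ V]

lemma ne_zero_of_whole {N : ℕ∞} {g : ℕ → V} (hs : SuitableEnum N g) {x : V}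
    (hx : x ∈ wholeSet N g) : x ≠ 0 := by
  obtain ⟨θ, hθ⟩ := hs.2.1
  intro h0
  have := hθ x hx
  rw [h0, map_zero] at this
  exact lt_irrefl 0 this

set_option maxHeartbeats 1000000 in
/-- The key rank-2 lemma for the case where `g n` is not generated by `C`. -/
lemma main_coclosed {N : ℕ∞} {g : ℕ → V} (hs : SuitableEnum N g) {n : ℕ}
    (hn : n ∈ domN N) {C : Set V} (hC : IsBiclosedIn (seg N g n) C)
    (nocone : ∀ x ∈ C, ∀ y ∈ C, g n ∉ cone2 x y)
    {α δ : V} (hα : α ∈ seg N g n) (hαC : α ∉ C)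
    (hδ : δ ∈ seg N g n) (hδcone : δ ∈ cone2 α (g n)) : δ ∉ C := by
  intro hδC
  set X := wholeSet N g with hXdef
  set γ := g n with hγdef
  have hγX : γ ∈ X := ⟨n, hn, rfl⟩
  have hαX : α ∈ X := seg_subset_whole hα
  have hδX : δ ∈ X := seg_subset_whole hδ
  obtain ⟨a, b, ha, hb, hdelta⟩ := hδcone
  rcases eq_or_lt_of_le hb with hb0 | hbpos
  · -- b = 0 : δ = a • α, so α ∈ C, contradiction
    have hd' : δ = a • α := by rw [hdelta, ← hb0, zero_smul, add_zero]
    have hane : a ≠ 0 := by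
      intro h0
      exact ne_zero_of_whole hs hδX (by rw [hd', h0, zero_smul])
    exact hαC (hC.1.2 δ hδC δ hδC α hα
      (mem_cone2_self (inv_nonneg.2 ha)
        (by rw [hd', smul_smul, inv_mul_cancel₀ hane, one_smul])))
  rcases eq_or_lt_of_le ha with ha0 | hapos
  · -- a = 0 : δ = b • γ, so γ ∈ cone2 δ δ, contradicting nocone
    have hd' : δ = b • γ := by rw [hdelta, ← ha0, zero_smul, zero_add]
    refine nocone δ hδC δ hδC (mem_cone2_self (inv_nonneg.2 hb) ?_)
    rw [hd', smul_smul, inv_mul_cancel₀ (ne_of_gt hbpos), one_smul]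
  by_cases hdep : ∃ c : ℝ, γ = c • α
  · -- dependent case : δ is a positive multiple of α
    obtain ⟨c, hc⟩ := hdep
    obtain ⟨θ, hθ⟩ := hs.2.1
    have hcpos : 0 < c := by
      have h1 := hθ γ hγX
      have h2 := hθ α hαX
      rw [hc, map_smul, smul_eq_mul] at h1
      by_contra hcn
      push_neg at hcn
      nlinarith
    have hd' : δ = (a + b * c) • α := by rw [hdelta, hc]; module
    have habc : 0 < a + b * c := by positivity
    exact hαC (hC.1.2 δ hδC δ hδC α hα
      (mem_cone2_self (inv_nonneg.2 habc.le)
        (by rw [hd', smul_smul, inv_mul_cancel₀ (ne_of_gt habc), one_smul])))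
  · -- independent case : use the rank-2 structure
    have hα0 : α ≠ 0 := ne_zero_of_whole hs hαX
    have hindep : LinearIndependent ℝ ![γ, α] := by
      rw [linearIndependent_fin2]
      refine ⟨by simpa using hα0, fun c hc => hdep ⟨c, ?_⟩⟩
      simpa using hc.symm
    set Y : Set V := X ∩ (Submodule.span ℝ {γ, α} : Set V) with hYdef
    have hγY : γ ∈ Y := ⟨hγX, Submodule.subset_span (by simp)⟩
    have hαY : α ∈ Y := ⟨hαX, Submodule.subset_span (by simp)⟩
    have hδY : δ ∈ Y := by
      refine ⟨hδX, ?_⟩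
      rw [hdelta]
      exact Submodule.add_mem _
        (Submodule.smul_mem _ _ (Submodule.subset_span (by simp)))
        (Submodule.smul_mem _ _ (Submodule.subset_span (by simp)))
    have hspan : Submodule.span ℝ Y = Submodule.span ℝ {γ, α} := by
      refine le_antisymm (Submodule.span_le.2 fun z hz => hz.2) (Submodule.span_mono ?_)
      intro z hz
      rcases hz with rfl | hz
      · exact hγY
      · rw [Set.mem_singleton_iff] at hz; rw [hz]; exact hαY
    have hrank : Module.finrank ℝ (Submodule.span ℝ Y) = 2 := by
      rw [hspan]
      have hr : ({γ, α} : Set V) = Set.range ![γ, α] := by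
        ext z
        simp [Fin.exists_fin_two, eq_comm, or_comm]
      rw [hr, finrank_span_eq_card hindep]
      simp
    obtain ⟨⟨α₀, β₀, hfα₀, hfβ₀, hYsub⟩, horder⟩ :=
      hs.2.2.1 Y ⟨Submodule.span ℝ {γ, α}, rfl⟩ hrank
    by_cases hfundγ : IsFundIn Y γ
    · -- γ fundamental : then δ is fundamental, contradiction with δ = a•α + b•γ
      obtain ⟨k, hk, hkn, hgk⟩ := mem_seg_iff.1 hδ
      have hδfund : IsFundIn Y δ := by
        by_contra hnd
        exact absurd (horder γ δ hfundγ hδY hnd n hn k hk rfl hgk) (by omega)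
      apply hδfund.2
      have hαδ : α ≠ δ := by
        intro h
        apply hdep
        have h2 : α - a • α = b • γ := by
          rw [sub_eq_iff_eq_add']
          rw [← h] at hdelta
          exact hdelta
        refine ⟨b⁻¹ * (1 - a), ?_⟩
        rw [mul_smul, sub_smul, one_smul, h2, smul_smul,
          inv_mul_cancel₀ (ne_of_gt hbpos), one_smul]
      have hγδ : γ ≠ δ := by
        intro h
        have h2 : γ - b • γ = a • α := by
          rw [sub_eq_iff_eq_add]
          rw [← h] at hdelta
          exact hdelta
        by_cases hb1 : b = 1
        · apply hα0
          have : a • α = 0 := by rw [← h2, hb1, one_smul, sub_self]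
          have := smul_eq_zero.1 this
          rcases this with h' | h'
          · exact absurd h' (ne_of_gt hapos)
          · exact h'
        · apply hdep
          refine ⟨(1 - b)⁻¹ * a, ?_⟩
          rw [mul_smul, ← h2, show γ - b • γ = (1 - b) • γ by
              rw [sub_smul, one_smul], smul_smul,
            inv_mul_cancel₀ (sub_ne_zero.2 (Ne.symm hb1)), one_smul]
      have hαγ : α ≠ γ := by
        intro h
        exact hdep ⟨1, by rw [one_smul, h]⟩
      exact posSpan_pair ⟨hαY, by simpa using hαδ⟩ ⟨hγY, by simpa using hγδ⟩
        hαγ ha hb hdelta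
    · -- γ not fundamental : coordinate argument
      have hseg : ∀ ζ, IsFundIn Y ζ → ζ ∈ seg N g n := by
        intro ζ hζ
        obtain ⟨j, hj, hgj⟩ := hζ.1.1
        exact mem_seg_iff.2 ⟨j, hj, horder ζ γ hζ hγY hfundγ j hj n hn hgj rfl, hgj⟩
      obtain ⟨ax, ay, hax, hay, hαc⟩ := hYsub hαY
      obtain ⟨cx, cy, hcx, hcy, hγc⟩ := hYsub hγY
      have hδc : δ = (a * ax + b * cx) • α₀ + (a * ay + b * cy) • β₀ := by
        rw [hdelta, hαc, hγc]; module
      set dx := a * ax + b * cx with hdx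
      set dy := a * ay + b * cy with hdy
      have hdxnn : 0 ≤ dx := by positivity
      have hdynn : 0 ≤ dy := by positivity
      set D := ax * cy - ay * cx with hD
      have hα₀c : α₀ = (1:ℝ) • α₀ + (0:ℝ) • β₀ := by module
      have hβ₀c : β₀ = (0:ℝ) • α₀ + (1:ℝ) • β₀ := by module
      have hD0 : D ≠ 0 := by
        intro h0
        apply hdep
        by_cases hx0 : ax = 0
        · have hay0 : ay ≠ 0 := by
            intro h
            exact hα0 (by rw [hαc, hx0, h, zero_smul, zero_smul, add_zero])
          have hcx0 : cx = 0 := by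
            have h1 : ay * cx = 0 := by rw [hD, hx0] at h0; linarith
            rcases mul_eq_zero.1 h1 with h' | h'
            · exact absurd h' hay0
            · exact h'
          refine ⟨cy / ay, ?_⟩
          rw [hγc, hαc, hx0, hcx0]
          match_scalars
          · ring
          · field_simp
        · refine ⟨cx / ax, ?_⟩
          have hcy' : cy = cx / ax * ay := by
            rw [hD] at h0
            field_simp
            linarith
          rw [hγc, hαc, hcy']
          match_scalars
          · field_simp
          · ring
      rcases lt_or_gt_of_ne hD0 with hDneg | hDpos
      · -- D < 0 : γ ∈ cone2 α₀ δ and δ ∈ cone2 α₀ α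
        have hdy0 : 0 < dy := by
          rcases eq_or_lt_of_le hdynn with h | h
          · exfalso
            have hay0 : ay = 0 := by
              by_contra hne
              have h1 : 0 < a * ay := mul_pos hapos (lt_of_le_of_ne hay (Ne.symm hne))
              nlinarith [mul_nonneg hbpos.le hcy]
            have hcy0 : cy = 0 := by
              by_contra hne
              have h1 : 0 < b * cy := mul_pos hbpos (lt_of_le_of_ne hcy (Ne.symm hne))
              nlinarith [mul_nonneg hapos.le hay]
            have : D = 0 := by rw [hD, hay0, hcy0]; ring
            linarith
          · exact h
        have hay0 : 0 < ay := by
          rcases eq_or_lt_of_le hay with h | h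
          · exfalso
            have : D = ax * cy := by rw [hD, ← h]; ring
            nlinarith [mul_nonneg hax hcy]
          · exact h
        have k1 : cx * dy - cy * dx = -(a * D) := by rw [hdx, hdy, hD]; ring
        have k2 : dx * ay - dy * ax = -(b * D) := by rw [hdx, hdy, hD]; ring
        have hγcone : γ ∈ cone2 α₀ δ :=
          cone2_of_coords hα₀c hδc hγc (by linarith)
            (by rw [k1]; nlinarith) (by linarith)
        have hδcone2 : δ ∈ cone2 α₀ α :=
          cone2_of_coords hα₀c hαc hδc (by linarith)
            (by rw [k2]; nlinarith) (by linarith)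
        by_cases hα₀C : α₀ ∈ C
        · exact nocone α₀ hα₀C δ hδC hγcone
        · exact (hC.2.2 α₀ ⟨hseg α₀ hfα₀, hα₀C⟩ α ⟨hα, hαC⟩ δ hδ hδcone2).2 hδC
      · -- D > 0 : γ ∈ cone2 δ β₀ and δ ∈ cone2 α β₀
        have hdx0 : 0 < dx := by
          rcases eq_or_lt_of_le hdxnn with h | h
          · exfalso
            have hax0 : ax = 0 := by
              by_contra hne
              have h1 : 0 < a * ax := mul_pos hapos (lt_of_le_of_ne hax (Ne.symm hne))
              nlinarith [mul_nonneg hbpos.le hcx]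
            have hcx0 : cx = 0 := by
              by_contra hne
              have h1 : 0 < b * cx := mul_pos hbpos (lt_of_le_of_ne hcx (Ne.symm hne))
              nlinarith [mul_nonneg hapos.le hax]
            have : D = 0 := by rw [hD, hax0, hcx0]; ring
            linarith
          · exact h
        have hax0 : 0 < ax := by
          rcases eq_or_lt_of_le hax with h | h
          · exfalso
            have : D = -(ay * cx) := by rw [hD, ← h]; ring
            nlinarith [mul_nonneg hay hcx]
          · exact h
        have k1 : dx * cy - dy * cx = a * D := by rw [hdx, hdy, hD]; ring
        have k2 : ax * dy - ay * dx = b * D := by rw [hdx, hdy, hD]; ring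
        have hγcone : γ ∈ cone2 δ β₀ :=
          cone2_of_coords hδc hβ₀c hγc (by linarith)
            (by linarith) (by rw [k1]; nlinarith)
        have hδcone2 : δ ∈ cone2 α β₀ :=
          cone2_of_coords hαc hβ₀c hδc (by linarith)
            (by linarith) (by rw [k2]; nlinarith)
        by_cases hβ₀C : β₀ ∈ C
        · exact nocone δ hδC β₀ hβ₀C hγcone
        · exact (hC.2.2 α ⟨hα, hαC⟩ β₀ ⟨hseg β₀ hfβ₀, hβ₀C⟩ δ hδ hδcone2).2 hδC

end Helpers3
section Helpers4

variable {V : Type*} [AddCommGroup V] [Module ℝ V]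

lemma closure_seg_mono {N : ℕ∞} {g : ℕ → V} {U : Set V} {i j : ℕ} (hij : i ≤ j)
    (hUi : U ⊆ seg N g i) :
    closureIn (seg N g i) U ⊆ closureIn (seg N g j) U ∩ seg N g i :=
  closureIn_min (Set.subset_inter subset_closureIn hUi)
    (closedIn_restrict (closureIn_isClosed (hUi.trans (seg_mono hij))) (seg_mono hij))

set_option maxHeartbeats 1000000 in
lemma step_lemma {N : ℕ∞} {g : ℕ → V} (hs : SuitableEnum N g) {U : Set V} {n : ℕ}
    (hUn : U ⊆ seg N g n)
    (hbi : IsBiclosedIn (seg N g n) (closureIn (seg N g n) U)) :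
    IsBiclosedIn (seg N g (n + 1)) (closureIn (seg N g (n + 1)) U) ∧
    closureIn (seg N g (n + 1)) U ∩ seg N g n = closureIn (seg N g n) U := by
  by_cases hdom : n ∈ domN N
  swap
  · -- trivial case: the segment does not grow
    rw [seg_succ_not_mem hdom]
    exact ⟨hbi, Set.inter_eq_left.2 (closureIn_isClosed hUn).1⟩
  set S := seg N g with hSdef
  set C := closureIn (S n) U with hCdef
  set γ := g n with hγdef
  have hsucc : S (n + 1) = insert γ (S n) := seg_succ_mem hdom
  have hγnot : γ ∉ S n := self_not_mem_seg hs.1 hdom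
  have hγX : γ ∈ wholeSet N g := ⟨n, hdom, rfl⟩
  have hUsucc : U ⊆ S (n + 1) := hUn.trans (seg_mono (Nat.le_succ n))
  have hCclosed : IsClosedIn (S n) C := closureIn_isClosed hUn
  have hCsub : C ⊆ S n := hCclosed.1
  have hCmono : C ⊆ closureIn (S (n + 1)) U :=
    (closure_seg_mono (Nat.le_succ n) hUn).trans Set.inter_subset_left
  by_cases hcc : ∃ x ∈ C, ∃ y ∈ C, γ ∈ cone2 x y
  · -- case (ii): γ is generated; the closure grows by exactly γ
    obtain ⟨p, hp, q, hq, hγcone⟩ := hcc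
    obtain ⟨c, d, hcnn, hdnn, hγeq⟩ := hγcone
    set D₁ := insert γ C with hD₁def
    -- closedness of D₁
    have hD₁closed : IsClosedIn (S (n + 1)) D₁ := by
      constructor
      · rw [hsucc]; exact Set.insert_subset_insert hCsub
      intro x hx y hy w hw hwcone
      rw [hsucc] at hw
      rcases hw with rfl | hwS
      · exact Set.mem_insert _ _
      refine Set.mem_insert_iff.2 (Or.inr ?_)
      obtain ⟨s, r, hsnn, hrnn, hweq⟩ := hwcone
      have hwX : w ∈ wholeSet N g := seg_subset_whole hwS
      -- key subcase: w = s • x + r • γ with x ∈ C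
      have key : ∀ x ∈ C, ∀ s r : ℝ, 0 ≤ s → 0 ≤ r → w = s • x + r • γ → w ∈ C := by
        intro x hxC s r hsnn hrnn hweq
        rcases eq_or_lt_of_le hrnn with hr0 | hrpos
        · -- r = 0
          exact hCclosed.2 x hxC x hxC w hwS
            ⟨s, 0, hsnn, le_refl 0, by rw [hweq, ← hr0, zero_smul, add_zero, zero_smul, add_zero]⟩
        by_contra hwC
        obtain ⟨F, hF, hpF, hqF, hxF, hclean⟩ :=
          hs.2.2.2 n p (hCsub hp) q (hCsub hq) x (hCsub hxC)
        have hγF : γ ∈ F := hF.2 p hpF q hqF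
          ⟨hγX, Submodule.mem_span_pair.2 ⟨c, d, hγeq.symm⟩⟩
        have hwF : w ∈ F := hF.2 x hxF γ hγF
          ⟨hwX, Submodule.mem_span_pair.2 ⟨s, r, hweq.symm⟩⟩
        have hBbi : IsBiclosedIn (F ∩ S n) (C ∩ (F ∩ S n)) :=
          biclosed_restrict hbi Set.inter_subset_right
        obtain ⟨-, hsep⟩ := hclean _ hBbi
        have hz1 : w ∈ posSpan (C ∩ (F ∩ S n)) := by
          have hweq' : w = s • x + ((r * c) • p + (r * d) • q) := by
            rw [hweq, hγeq]; module
          rw [hweq']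
          exact posSpan_add (posSpan_smul hsnn (posSpan_mem ⟨hxC, hxF, hCsub hxC⟩))
            (posSpan_add (posSpan_smul (by positivity) (posSpan_mem ⟨hp, hpF, hCsub hp⟩))
              (posSpan_smul (by positivity) (posSpan_mem ⟨hq, hqF, hCsub hq⟩)))
        have hz2 : w ∈ posSpan ((F ∩ S n) \ (C ∩ (F ∩ S n))) :=
          posSpan_mem ⟨⟨hwF, hwS⟩, fun hmem => hwC hmem.1⟩
        have hw0 : w = 0 := by
          have hmem := Set.mem_inter hz1 hz2
          rw [hsep] at hmem
          exact hmem
        exact ne_zero_of_whole hs hwX hw0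
      rcases hx with rfl | hxC <;> rcases hy with rfl | hyC
      · -- x = y = γ
        refine hCclosed.2 p hp q hq w hwS
          ⟨(s + r) * c, (s + r) * d, by positivity, by positivity, ?_⟩
        rw [hweq, hγeq]; module
      · -- x = γ, y ∈ C
        exact key y hyC r s hrnn hsnn (by rw [hweq, add_comm])
      · -- x ∈ C, y = γ
        exact key x hxC s r hsnn hrnn hweq
      · exact hCclosed.2 x hxC y hyC w hwS ⟨s, r, hsnn, hrnn, hweq⟩
    -- coclosedness of D₁
    have hcompl : S (n + 1) \ D₁ = S n \ C := by
      rw [hsucc, hD₁def]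
      ext z
      constructor
      · rintro ⟨hz1, hz2⟩
        rcases hz1 with rfl | hz1
        · exact absurd (Set.mem_insert _ _) hz2
        · exact ⟨hz1, fun hzC => hz2 (Set.mem_insert_iff.2 (Or.inr hzC))⟩
      · rintro ⟨hz1, hz2⟩
        refine ⟨Set.mem_insert_iff.2 (Or.inr hz1), ?_⟩
        rintro (rfl | hzC)
        · exact hγnot hz1
        · exact hz2 hzC
    have hD₁cocl : IsClosedIn (S (n + 1)) (S (n + 1) \ D₁) := by
      rw [hcompl]
      constructor
      · exact Set.diff_subset.trans (seg_mono (Nat.le_succ n))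
      intro x hx y hy w hw hwcone
      rw [hsucc] at hw
      rcases hw with rfl | hwS
      swap
      · exact hbi.2.2 x hx y hy w hwS hwcone
      -- w = γ : contradiction
      exfalso
      obtain ⟨s, r, hsnn, hrnn, hγxy⟩ := hwcone
      have hγ0 : γ ≠ 0 := ne_zero_of_whole hs hγX
      rcases eq_or_lt_of_le hrnn with hr0 | hrpos
      · -- r = 0 : γ = s • x, so x ∈ C, contradiction
        have hne : s ≠ 0 := by
          intro h0
          exact hγ0 (by rw [hγxy, ← hr0, h0, zero_smul, zero_smul, add_zero])
        have hxC : x ∈ C := hCclosed.2 p hp q hq x hx.1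
          ⟨s⁻¹ * c, s⁻¹ * d, by positivity, by positivity, by
            have hx' : x = s⁻¹ • γ := by
              rw [hγxy, ← hr0, zero_smul, add_zero, smul_smul,
                inv_mul_cancel₀ hne, one_smul]
            rw [hx', hγeq]; module⟩
        exact hx.2 hxC
      rcases eq_or_lt_of_le hsnn with hs0 | hspos
      · -- s = 0 : γ = r • y, so y ∈ C, contradiction
        have hne : r ≠ 0 := ne_of_gt hrpos
        have hyC : y ∈ C := hCclosed.2 p hp q hq y hy.1
          ⟨r⁻¹ * c, r⁻¹ * d, by positivity, by positivity, by
            have hy' : y = r⁻¹ • γ := by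
              rw [hγxy, ← hs0, zero_smul, zero_add, smul_smul,
                inv_mul_cancel₀ hne, one_smul]
            rw [hy', hγeq]; module⟩
        exact hy.2 hyC
      -- s, r > 0 : clean separation argument
      obtain ⟨F, hF, hpF, hqF, hxF, hclean⟩ :=
        hs.2.2.2 n p (hCsub hp) q (hCsub hq) x hx.1
      have hγF : γ ∈ F := hF.2 p hpF q hqF
        ⟨hγX, Submodule.mem_span_pair.2 ⟨c, d, hγeq.symm⟩⟩
      have hyF : y ∈ F := by
        refine hF.2 x hxF γ hγF ⟨seg_subset_whole hy.1,
          Submodule.mem_span_pair.2 ⟨-(s / r), 1 / r, ?_⟩⟩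
        rw [hγxy]
        match_scalars
        · field_simp; ring
        · field_simp
      have hBbi : IsBiclosedIn (F ∩ S n) (C ∩ (F ∩ S n)) :=
        biclosed_restrict hbi Set.inter_subset_right
      obtain ⟨-, hsep⟩ := hclean _ hBbi
      have hz1 : γ ∈ posSpan (C ∩ (F ∩ S n)) := by
        rw [hγeq]
        exact posSpan_add (posSpan_smul hcnn (posSpan_mem ⟨hp, hpF, hCsub hp⟩))
          (posSpan_smul hdnn (posSpan_mem ⟨hq, hqF, hCsub hq⟩))
      have hz2 : γ ∈ posSpan ((F ∩ S n) \ (C ∩ (F ∩ S n))) := by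
        rw [hγxy]
        exact posSpan_add
          (posSpan_smul hsnn (posSpan_mem ⟨⟨hxF, hx.1⟩, fun hmem => hx.2 hmem.1⟩))
          (posSpan_smul hrnn (posSpan_mem ⟨⟨hyF, hy.1⟩, fun hmem => hy.2 hmem.1⟩))
      have : γ = 0 := by
        have hmem := Set.mem_inter hz1 hz2
        rw [hsep] at hmem
        exact hmem
      exact hγ0 this
    -- identify the closure
    have hγmem : γ ∈ closureIn (S (n + 1)) U :=
      (closureIn_isClosed hUsucc).2 p (hCmono hp) q (hCmono hq) γ
        (by rw [hsucc]; exact Set.mem_insert _ _) ⟨c, d, hcnn, hdnn, hγeq⟩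
    have hD₁eq : closureIn (S (n + 1)) U = D₁ := by
      refine le_antisymm (closureIn_min (subset_closureIn.trans (Set.subset_insert _ _))
        hD₁closed) (Set.insert_subset hγmem hCmono)
    refine ⟨⟨by rw [hD₁eq]; exact hD₁closed, by rw [hD₁eq]; exact hD₁cocl⟩, ?_⟩
    rw [hD₁eq, hD₁def, Set.insert_inter_of_notMem hγnot]
    exact Set.inter_eq_left.2 hCsub
  · -- case (i): γ is not generated; the closure does not grow
    push_neg at hcc
    have hγC : γ ∉ C := fun h => hγnot (hCsub h)
    have hCclosed' : IsClosedIn (S (n + 1)) C := by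
      refine ⟨hCsub.trans (seg_mono (Nat.le_succ n)), ?_⟩
      intro x hx y hy w hw hwcone
      rw [hsucc] at hw
      rcases hw with rfl | hwS
      · exact absurd hwcone (hcc x hx y hy)
      · exact hCclosed.2 x hx y hy w hwS hwcone
    have hCeq : closureIn (S (n + 1)) U = C :=
      le_antisymm (closureIn_min subset_closureIn hCclosed') hCmono
    have hcompl : S (n + 1) \ C = insert γ (S n \ C) := by
      rw [hsucc, Set.insert_diff_of_notMem _ hγC]
    have hcocl : IsClosedIn (S (n + 1)) (S (n + 1) \ C) := by
      rw [hcompl]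
      constructor
      · rw [hsucc]
        exact Set.insert_subset_insert Set.diff_subset
      intro x hx y hy w hw hwcone
      rw [hsucc] at hw
      rcases hw with rfl | hwS
      · exact Set.mem_insert _ _
      refine Set.mem_insert_iff.2 (Or.inr ⟨hwS, ?_⟩)
      rcases hx with rfl | hxC <;> rcases hy with rfl | hyC
      · -- x = y = γ
        intro hwC
        obtain ⟨s, r, hsnn, hrnn, hweq⟩ := hwcone
        have hw0 : w ≠ 0 := ne_zero_of_whole hs (seg_subset_whole hwS)
        have hne : s + r ≠ 0 := by
          intro h0
          apply hw0
          rw [hweq, ← add_smul, h0, zero_smul]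
        refine hcc w hwC w hwC (mem_cone2_self (c := (s + r)⁻¹) (by positivity) ?_)
        rw [hweq, ← add_smul, smul_smul, inv_mul_cancel₀ hne, one_smul]
      · -- x = γ, y ∈ S n \ C
        exact main_coclosed hs hdom hbi hcc hyC.1 hyC.2 hwS (cone2_comm hwcone)
      · -- x ∈ S n \ C, y = γ
        exact main_coclosed hs hdom hbi hcc hxC.1 hxC.2 hwS hwcone
      · exact (hbi.2.2 x hxC y hyC w hwS hwcone).2
    refine ⟨⟨by rw [hCeq]; exact hCclosed', by rw [hCeq]; exact hcocl⟩, ?_⟩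
    rw [hCeq]
    exact Set.inter_eq_left.2 hCsub

end Helpers4
/-- If `X` has a suitable ordering, `Xₘ` is an initial segment, and `U`
is biclosed in `Xₘ`, then the closure `Ū` of `U` in `X` is biclosed in `X` and
satisfies `Ū ∩ Xₘ = U`. -/
theorem closure_of_biclosed_restricts
    (N : ℕ∞) (g : ℕ → V) (hs : SuitableEnum N g)
    (m : ℕ) (U : Set V) (hU : IsBiclosedIn (seg N g m) U) :
    IsBiclosedIn (wholeSet N g) (closureIn (wholeSet N g) U) ∧
    closureIn (wholeSet N g) U ∩ seg N g m = U := by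
  have hUm : U ⊆ seg N g m := hU.1.1
  have hUX : U ⊆ wholeSet N g := hUm.trans seg_subset_whole
  have base : closureIn (seg N g m) U = U :=
    le_antisymm (closureIn_min subset_rfl hU.1) subset_closureIn
  have hUk : ∀ k, U ⊆ seg N g (m + k) :=
    fun k => hUm.trans (seg_mono (Nat.le_add_right m k))
  have key : ∀ k, IsBiclosedIn (seg N g (m + k)) (closureIn (seg N g (m + k)) U) ∧
      closureIn (seg N g (m + k)) U ∩ seg N g m = U := by
    intro k
    induction k with
    | zero =>
      constructor
      · rw [Nat.add_zero, base]; exact hU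
      · rw [Nat.add_zero, base]; exact Set.inter_eq_left.2 hUm
    | succ k ih =>
      have hst := step_lemma hs (hUk k) ih.1
      refine ⟨hst.1, ?_⟩
      have hinter : closureIn (seg N g (m + k + 1)) U ∩ seg N g m =
          (closureIn (seg N g (m + k + 1)) U ∩ seg N g (m + k)) ∩ seg N g m := by
        ext z
        constructor
        · rintro ⟨hz1, hz2⟩
          exact ⟨⟨hz1, seg_mono (Nat.le_add_right m k) hz2⟩, hz2⟩
        · rintro ⟨⟨hz1, _⟩, hz2⟩
          exact ⟨hz1, hz2⟩
      calc closureIn (seg N g (m + (k + 1))) U ∩ seg N g m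
          = (closureIn (seg N g (m + k + 1)) U ∩ seg N g (m + k)) ∩ seg N g m := hinter
        _ = closureIn (seg N g (m + k)) U ∩ seg N g m := by rw [hst.2]
        _ = U := ih.2
  have hClm : ∀ k k', k ≤ k' →
      closureIn (seg N g (m + k)) U ⊆ closureIn (seg N g (m + k')) U :=
    fun k k' hk => (closure_seg_mono (by omega) (hUk k)).trans Set.inter_subset_left
  have hClseg : ∀ k, closureIn (seg N g (m + k)) U ⊆ seg N g (m + k) :=
    fun k => (closureIn_isClosed (hUk k)).1
  have hWclosed : IsClosedIn (wholeSet N g) (⋃ k, closureIn (seg N g (m + k)) U) := by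
    constructor
    · exact Set.iUnion_subset fun k => (hClseg k).trans seg_subset_whole
    intro x hx y hy w hw hwcone
    obtain ⟨k1, hx1⟩ := Set.mem_iUnion.1 hx
    obtain ⟨k2, hy1⟩ := Set.mem_iUnion.1 hy
    obtain ⟨nw, hw1⟩ := mem_whole_exists_seg hw
    have hx2 := hClm k1 (max (max k1 k2) nw) (by omega) hx1
    have hy2 := hClm k2 (max (max k1 k2) nw) (by omega) hy1
    have hw2 : w ∈ seg N g (m + max (max k1 k2) nw) :=
      seg_mono (by omega : nw ≤ m + max (max k1 k2) nw) hw1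
    exact Set.mem_iUnion.2 ⟨max (max k1 k2) nw,
      (key _).1.1.2 x hx2 y hy2 w hw2 hwcone⟩
  have hCeq : closureIn (wholeSet N g) U = ⋃ k, closureIn (seg N g (m + k)) U := by
    refine le_antisymm (closureIn_min ?_ hWclosed) (Set.iUnion_subset fun k => ?_)
    · exact subset_closureIn.trans
        (Set.subset_iUnion (fun k => closureIn (seg N g (m + k)) U) 0)
    · exact (closureIn_min (Set.subset_inter subset_closureIn (hUk k))
        (closedIn_restrict (closureIn_isClosed hUX) seg_subset_whole)).trans
        Set.inter_subset_left
  refine ⟨⟨closureIn_isClosed hUX, ?_⟩, ?_⟩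
  · -- coclosedness
    refine ⟨Set.diff_subset, ?_⟩
    intro x hx y hy w hw hwcone
    refine ⟨hw, fun hwC => ?_⟩
    rw [hCeq] at hwC
    obtain ⟨k0, hwk⟩ := Set.mem_iUnion.1 hwC
    obtain ⟨nx, hx1⟩ := mem_whole_exists_seg hx.1
    obtain ⟨ny, hy1⟩ := mem_whole_exists_seg hy.1
    set k := max (max nx ny) k0 with hkdef
    have hw2 : w ∈ closureIn (seg N g (m + k)) U := hClm k0 k (by omega) hwk
    have hx2 : x ∈ seg N g (m + k) := seg_mono (by omega : nx ≤ m + k) hx1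
    have hy2 : y ∈ seg N g (m + k) := seg_mono (by omega : ny ≤ m + k) hy1
    have hxC : x ∉ closureIn (seg N g (m + k)) U := fun h =>
      hx.2 (by rw [hCeq]; exact Set.mem_iUnion.2 ⟨k, h⟩)
    have hyC : y ∉ closureIn (seg N g (m + k)) U := fun h =>
      hy.2 (by rw [hCeq]; exact Set.mem_iUnion.2 ⟨k, h⟩)
    exact ((key k).1.2.2 x ⟨hx2, hxC⟩ y ⟨hy2, hyC⟩ w (hClseg k hw2) hwcone).2 hw2
  · -- the intersection identity
    apply le_antisymm
    · intro z hz
      have hz1 := hz.1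
      rw [hCeq] at hz1
      obtain ⟨k, hk⟩ := Set.mem_iUnion.1 hz1
      rw [← (key k).2]
      exact ⟨hk, hz.2⟩
    · exact Set.subset_inter subset_closureIn hUm
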